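/- Let μ ∈ ℝ^{2d−1} with invertible d×d Hankel matrix M whose top-left (d−1)×(d−1) submatrix is also invertible. Let x₁(t) < ... < x_d(t) be continuous functions on an unbounded interval A' ⊂ ℝ such that (−1)^k e_k(x₁(t),...,x_d(t)) = σ_k(t), where σ_k(t) are the affine functions of t given by the Cramer's rule parametrization of the Prony curve (so σ₁(t) has slope ±M_{d,d}/det M ≠ 0). Then as t → ∞ in A', at most one node x_i(t) tends to infinity in absolute value. -/

import Mathlib

open Polynomial Filter Matrix

lemma aux_tendsto_eval_div_pow (p : ℝ[X]) (d : ℕ) (hd : p.natDegree < d + 1) :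
    Tendsto (fun z : ℝ => p.eval z / z ^ d) (atBot ⊔ atTop) (nhds (p.coeff d)) := by
  set q : ℝ[X] := ∑ k ∈ Finset.range (d + 1), C (p.coeff k) * X ^ (d - k) with hq
  have hkey : ∀ z : ℝ, z ≠ 0 → p.eval z / z ^ d = q.eval z⁻¹ := by
    intro z hz
    rw [Polynomial.eval_eq_sum_range' hd, hq, Polynomial.eval_finset_sum, Finset.sum_div]
    refine Finset.sum_congr rfl fun k hk => ?_
    rw [Finset.mem_range] at hk
    have hk' : k ≤ d := Nat.lt_succ_iff.mp hk
    rw [eval_mul, eval_C, eval_pow, eval_X, inv_pow, mul_div_assoc]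
    congr 1
    have hzd : z ^ d = z ^ k * z ^ (d - k) := by rw [← pow_add, Nat.add_sub_cancel' hk']
    rw [hzd, ← div_div, div_self (pow_ne_zero k hz), one_div]
  have hq0 : q.eval 0 = p.coeff d := by
    rw [hq, Polynomial.eval_finset_sum, Finset.sum_eq_single d]
    · simp
    · intro k hk hkd
      have h1 : d - k ≠ 0 := by rw [Finset.mem_range] at hk; omega
      simp [zero_pow h1]
    · intro h; exact absurd (Finset.self_mem_range_succ d) h
  have hcont : Tendsto (fun y : ℝ => q.eval y) (nhds 0) (nhds (p.coeff d)) := by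
    simpa [hq0] using (q.continuous).tendsto 0
  have hinv : Tendsto (fun z : ℝ => z⁻¹) (atBot ⊔ atTop) (nhds (0 : ℝ)) := by
    rw [tendsto_sup]
    constructor
    · have := ((tendsto_inv_atTop_zero (𝕜 := ℝ)).comp tendsto_neg_atBot_atTop).neg
      simpa [Function.comp, inv_neg] using this
    · exact tendsto_inv_atTop_zero
  have hmain : Tendsto (fun z : ℝ => q.eval z⁻¹) (atBot ⊔ atTop) (nhds (p.coeff d)) :=
    hcont.comp hinv
  refine hmain.congr' ?_
  have h1 : ∀ᶠ z : ℝ in atBot ⊔ atTop, z ≠ 0 := by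
    rw [eventually_sup]
    exact ⟨eventually_ne_atBot 0, eventually_ne_atTop 0⟩
  filter_upwards [h1] with z hz
  exact (hkey z hz).symm

lemma aux_rolle (A B : ℝ[X]) (t u v : ℝ) (huv : u < v)
    (hsafe : ∀ z ∈ Set.Icc u v, ¬ (B * (derivative A * B - A * derivative B)).IsRoot z)
    (hru : A.eval u + t * B.eval u = 0) (hrv : A.eval v + t * B.eval v = 0) : False := by
  have hBz : ∀ z ∈ Set.Icc u v, B.eval z ≠ 0 := by
    intro z hz hB0
    exact hsafe z hz (by simp [Polynomial.IsRoot, hB0])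
  have hCz : ∀ z ∈ Set.Icc u v,
      (derivative A).eval z * B.eval z - A.eval z * (derivative B).eval z ≠ 0 := by
    intro z hz h0
    exact hsafe z hz (by simp [Polynomial.IsRoot]; right; simpa using h0)
  set φ : ℝ → ℝ := fun z => -(A.eval z / B.eval z) with hφ
  have hderiv : ∀ z ∈ Set.Icc u v, HasDerivAt φ
      (-(((derivative A).eval z * B.eval z - A.eval z * (derivative B).eval z) /
        (B.eval z) ^ 2)) z := by
    intro z hz
    exact ((A.hasDerivAt z).div (B.hasDerivAt z) (hBz z hz)).neg
  have hcont : ContinuousOn φ (Set.Icc u v) :=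
    fun z hz => (hderiv z hz).continuousAt.continuousWithinAt
  have hφu : φ u = t := by
    have hBu := hBz u (Set.left_mem_Icc.mpr huv.le)
    rw [hφ]
    field_simp
    linarith [hru]
  have hφv : φ v = t := by
    have hBv := hBz v (Set.right_mem_Icc.mpr huv.le)
    rw [hφ]
    field_simp
    linarith [hrv]
  obtain ⟨ξ, hξ, h0⟩ := exists_hasDerivAt_eq_zero huv hcont (hφu.trans hφv.symm)
    (fun z hz => hderiv z (Set.mem_Icc_of_Ioo hz))
  have hξ' : ξ ∈ Set.Icc u v := Set.mem_Icc_of_Ioo hξ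
  apply hCz ξ hξ'
  rw [neg_eq_zero, _root_.div_eq_zero_iff] at h0
  rcases h0 with h0 | h0
  · exact h0
  · exact absurd (pow_eq_zero_iff (n := 2) (by norm_num) |>.mp h0) (hBz ξ hξ')

lemma aux_no_two (A B : ℝ[X]) (hB : B ≠ 0)
    (hC : derivative A * B - A * derivative B ≠ 0)
    (X Y : ℝ → ℝ)
    (hrX : ∀ᶠ t in atTop, A.eval (X t) + t * B.eval (X t) = 0)
    (hrY : ∀ᶠ t in atTop, A.eval (Y t) + t * B.eval (Y t) = 0)
    (hne : ∀ᶠ t in atTop, X t ≠ Y t)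
    (hbr : (Tendsto X atTop atTop ∧ Tendsto Y atTop atTop) ∨
           (Tendsto X atTop atBot ∧ Tendsto Y atTop atBot)) : False := by
  have hDne : B * (derivative A * B - A * derivative B) ≠ 0 := mul_ne_zero hB hC
  obtain ⟨Rhi, hRhi⟩ := (B * (derivative A * B - A * derivative B)).exists_max_root hDne
  obtain ⟨Rlo, hRlo⟩ := (B * (derivative A * B - A * derivative B)).exists_min_root hDne
  have hget : ∃ t, (A.eval (X t) + t * B.eval (X t) = 0) ∧
      (A.eval (Y t) + t * B.eval (Y t) = 0) ∧ X t ≠ Y t ∧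
      (∀ z ∈ Set.Icc (min (X t) (Y t)) (max (X t) (Y t)),
        ¬ (B * (derivative A * B - A * derivative B)).IsRoot z) := by
    rcases hbr with ⟨hX, hY⟩ | ⟨hX, hY⟩
    · obtain ⟨t, h1, h2, h3, h4, h5⟩ :=
        ((hX.eventually_gt_atTop Rhi).and ((hY.eventually_gt_atTop Rhi).and
          (hrX.and (hrY.and hne)))).exists
      refine ⟨t, h3, h4, h5, fun z hz hroot => ?_⟩
      have hzle := hRhi z hroot
      have : Rhi < min (X t) (Y t) := lt_min h1 h2
      linarith [hz.1]
    · obtain ⟨t, h1, h2, h3, h4, h5⟩ :=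
        ((hX.eventually_lt_atBot Rlo).and ((hY.eventually_lt_atBot Rlo).and
          (hrX.and (hrY.and hne)))).exists
      refine ⟨t, h3, h4, h5, fun z hz hroot => ?_⟩
      have hzle := hRlo z hroot
      have : max (X t) (Y t) < Rlo := max_lt h1 h2
      linarith [hz.2]
  obtain ⟨t, hXt, hYt, hne', hsafe⟩ := hget
  rcases hne'.lt_or_gt with hlt | hlt
  · refine aux_rolle A B t _ _ hlt (fun z hz => hsafe z ?_) hXt hYt
    rwa [min_eq_left hlt.le, max_eq_right hlt.le]
  · refine aux_rolle A B t _ _ hlt (fun z hz => hsafe z ?_) hYt hXt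
    rwa [min_eq_right hlt.le, max_eq_left hlt.le]


/-- If the Hankel matrix `M` of `μ` and its top-left `(d-1) × (d-1)` submatrix
are invertible (`d = n + 1 ≥ 2`), and `x₁(t) < ⋯ < x_d(t)` are continuous
functions on an unbounded interval `(T, ∞)` whose signed elementary symmetric
functions `σ_k(t)` (the coefficients of `∏ (z - x_i(t))`) satisfy the
Cramer's-rule linear system parametrizing the Prony curve, then as `t → ∞` at
most one of the nodes `x_i(t)` tends to infinity in absolute value. -/
theorem at_most_one_node_to_infinity (n : ℕ) (hn : 1 ≤ n) (μ : ℕ → ℝ)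
    (M : Matrix (Fin (n + 1)) (Fin (n + 1)) ℝ)
    (hMdef : M = Matrix.of fun (i j : Fin (n + 1)) => μ (i.1 + j.1))
    (hM : M.det ≠ 0)
    (hM' : (M.submatrix (Fin.castSucc : Fin n → Fin (n + 1))
        (Fin.castSucc : Fin n → Fin (n + 1))).det ≠ 0)
    (T : ℝ) (s : Fin (n + 1) → ℝ → ℝ) (x : Fin (n + 1) → ℝ → ℝ)
    (hcont : ∀ i, ContinuousOn (x i) (Set.Ioi T))
    (hmono : ∀ t ∈ Set.Ioi T, StrictMono (fun i => x i t))
    (hsys1 : ∀ t ∈ Set.Ioi T, ∀ k < n,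
      ∑ j : Fin (n + 1), μ (k + j.1) * s (Fin.rev j) t = -μ (n + 1 + k))
    (hsys2 : ∀ t ∈ Set.Ioi T,
      ∑ j : Fin (n + 1), μ (n + j.1) * s (Fin.rev j) t = t)
    (hcoeff : ∀ t ∈ Set.Ioi T, ∀ j : Fin (n + 1),
      (∏ i, (X - C (x i t))).coeff (n - j.1) = s j t) :
    ∀ i i' : Fin (n + 1),
      Tendsto (fun t => |x i t|) atTop atTop →
      Tendsto (fun t => |x i' t|) atTop atTop → i = i' := by
  intro i i' hi hi'
  by_contra hii
  have hMunit : IsUnit M.det := isUnit_iff_ne_zero.mpr hM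
  set b : Fin (n + 1) → ℝ := M⁻¹.mulVec (Pi.single (Fin.last n) 1) with hbdef
  set v : ℝ → Fin (n + 1) → ℝ := fun t k => s (Fin.rev k) t with hv
  -- the linear system
  have key : ∀ t ∈ Set.Ioi T, ∀ k : Fin (n + 1),
      M.mulVec (v t) k = if (k : ℕ) < n then -μ (n + 1 + (k : ℕ)) else t := by
    intro t ht k
    have hmv : M.mulVec (v t) k = ∑ j : Fin (n + 1), μ ((k : ℕ) + (j : ℕ)) * s (Fin.rev j) t := by
      simp [Matrix.mulVec, dotProduct, hMdef, hv]
    rw [hmv]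
    by_cases hk : (k : ℕ) < n
    · rw [if_pos hk]; exact hsys1 t ht k hk
    · rw [if_neg hk]
      have hkn : (k : ℕ) = n := by have := k.isLt; omega
      simp only [hkn]
      exact hsys2 t ht
  -- affine structure of v
  have haff : ∀ t ∈ Set.Ioi T, ∀ t' ∈ Set.Ioi T, v t = v t' + (t - t') • b := by
    intro t ht t' ht'
    have h1 : M.mulVec (v t - v t') = (t - t') • (Pi.single (Fin.last n) 1 : Fin (n+1) → ℝ) := by
      funext k
      rw [Matrix.mulVec_sub]
      simp only [Pi.sub_apply, Pi.smul_apply, smul_eq_mul]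
      rw [key t ht k, key t' ht' k]
      by_cases hk : (k : ℕ) < n
      · have hkne : k ≠ Fin.last n := by
          intro h; rw [h] at hk; simp [Fin.last] at hk
        rw [if_pos hk, if_pos hk, Pi.single_eq_of_ne hkne]
        ring
      · have hkeq : k = Fin.last n := by
          apply Fin.ext; have := k.isLt; simp [Fin.val_last]; omega
        rw [if_neg hk, if_neg hk, hkeq, Pi.single_eq_same]
        ring
    have h2 : v t - v t' = (t - t') • b := by
      have h3 : M⁻¹.mulVec (M.mulVec (v t - v t'))
          = M⁻¹.mulVec ((t - t') • (Pi.single (Fin.last n) 1 : Fin (n+1) → ℝ)) := by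
        rw [h1]
      rw [Matrix.mulVec_mulVec, Matrix.nonsing_inv_mul M hMunit, Matrix.one_mulVec,
        Matrix.mulVec_smul] at h3
      exact h3
    rw [← h2]; funext k; simp
  -- beta
  set β : ℝ := b (Fin.last n) with hβdef
  have hβ : β ≠ 0 := by
    have h1 : b (Fin.last n) = M⁻¹ (Fin.last n) (Fin.last n) := by
      rw [hbdef, Matrix.mulVec_single]; simp
    have h2 : M.adjugate (Fin.last n) (Fin.last n)
        = (M.submatrix (Fin.castSucc : Fin n → Fin (n + 1))
          (Fin.castSucc : Fin n → Fin (n + 1))).det := by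
      rw [Matrix.adjugate_apply, Matrix.det_succ_row _ (Fin.last n),
        Finset.sum_eq_single (Fin.last n)]
      · rw [Matrix.updateRow_self]
        simp only [Pi.single_eq_same, Fin.succAbove_last, Fin.val_last]
        have he : ((-1 : ℝ)) ^ (n + n) = 1 := Even.neg_one_pow ⟨n, rfl⟩
        simp only [he, one_mul, mul_one]
        congr 1
        ext a c
        simp only [Matrix.submatrix_apply]
        exact congrFun (Matrix.updateRow_ne (Fin.castSucc_lt_last a).ne) c.castSucc
      · intro j _ hj
        rw [Matrix.updateRow_self, Pi.single_eq_of_ne hj]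
        ring
      · intro h; exact absurd (Finset.mem_univ _) h
    rw [hβdef, h1, Matrix.inv_def, Matrix.smul_apply, h2, smul_eq_mul]
    exact mul_ne_zero (by simp [Ring.inverse_eq_inv', hM]) hM'
  -- polynomials
  set P : ℝ → ℝ[X] := fun t => ∏ j, (X - C (x j t)) with hP
  have hPm : ∀ t, (P t).Monic := fun t => monic_prod_of_monic _ _ fun j _ => monic_X_sub_C _
  have hPdeg : ∀ t, (P t).natDegree = n + 1 := by
    intro t
    rw [hP]
    rw [Polynomial.natDegree_prod_of_monic _ _ fun j _ => monic_X_sub_C _]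
    simp [Polynomial.natDegree_X_sub_C]
  have hPc : ∀ t ∈ Set.Ioi T, ∀ k : Fin (n + 1), (P t).coeff (k : ℕ) = v t k := by
    intro t ht k
    have h := hcoeff t ht (Fin.rev k)
    rw [Fin.val_rev] at h
    have hk : (k : ℕ) ≤ n := Nat.lt_succ_iff.mp k.isLt
    have hidx : n - (n + 1 - ((k : ℕ) + 1)) = (k : ℕ) := by omega
    rw [hidx] at h
    exact h
  set Bq : ℝ[X] := ∑ k : Fin (n + 1), C (b k) * X ^ (k : ℕ) with hBq
  have hBqc : ∀ k : Fin (n + 1), Bq.coeff (k : ℕ) = b k := by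
    intro k
    rw [hBq, Polynomial.finset_sum_coeff, Finset.sum_eq_single k]
    · simp [Polynomial.coeff_C_mul, Polynomial.coeff_X_pow]
    · intro j _ hj
      have : (k : ℕ) ≠ (j : ℕ) := fun h => hj (Fin.ext h.symm)
      simp [Polynomial.coeff_C_mul, Polynomial.coeff_X_pow, this]
    · intro h; exact absurd (Finset.mem_univ _) h
  have hBqhi : ∀ m, n < m → Bq.coeff m = 0 := by
    intro m hm
    rw [hBq, Polynomial.finset_sum_coeff]
    apply Finset.sum_eq_zero
    intro k _
    have : m ≠ (k : ℕ) := by have := Nat.lt_succ_iff.mp k.isLt; omega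
    simp [Polynomial.coeff_C_mul, Polynomial.coeff_X_pow, this]
  have ht₀T : (T + 1) ∈ Set.Ioi T := by simp
  set Aq : ℝ[X] := P (T + 1) - C (T + 1) * Bq with hAq
  have hPt : ∀ t ∈ Set.Ioi T, P t = Aq + C t * Bq := by
    intro t ht
    have hsub : P t - P (T + 1) = C (t - (T + 1)) * Bq := by
      ext m
      rw [Polynomial.coeff_sub, Polynomial.coeff_C_mul]
      rcases lt_or_ge m (n + 1) with hm | hm
      · have hk := hPc t ht ⟨m, hm⟩
        have hk₀ := hPc (T + 1) ht₀T ⟨m, hm⟩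
        have hbb := congrFun (haff t ht (T + 1) ht₀T) ⟨m, hm⟩
        simp only [Pi.add_apply, Pi.smul_apply, smul_eq_mul] at hbb
        have hBm := hBqc ⟨m, hm⟩
        rw [show ((⟨m, hm⟩ : Fin (n + 1)) : ℕ) = m from rfl] at hk hk₀ hBm
        rw [hk, hk₀, hBm, hbb]
        ring
      · rcases eq_or_lt_of_le hm with hm1 | hm1
        · rw [← hm1]
          rw [hBqhi _ (by omega)]
          have e1 := (hPm t).coeff_natDegree
          rw [hPdeg t] at e1
          have e2 := (hPm (T + 1)).coeff_natDegree
          rw [hPdeg (T + 1)] at e2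
          rw [e1, e2]
          ring
        · rw [Polynomial.coeff_eq_zero_of_natDegree_lt (by rw [hPdeg]; omega),
            Polynomial.coeff_eq_zero_of_natDegree_lt (by rw [hPdeg]; omega),
            hBqhi _ (by omega)]
          ring
    have : P t = P (T + 1) + C (t - (T + 1)) * Bq := by
      rw [← hsub]; ring
    rw [this, hAq, Polynomial.C_sub]
    ring
  -- coefficients of Aq, Bq
  have hAtop : Aq.coeff (n + 1) = 1 := by
    rw [hAq, Polynomial.coeff_sub, Polynomial.coeff_C_mul, hBqhi (n + 1) (by omega)]
    have e := (hPm (T + 1)).coeff_natDegree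
    rw [hPdeg (T + 1)] at e
    rw [e]; ring
  have hAhi : ∀ m, n + 1 < m → Aq.coeff m = 0 := by
    intro m hm
    rw [hAq, Polynomial.coeff_sub, Polynomial.coeff_C_mul,
      Polynomial.coeff_eq_zero_of_natDegree_lt (by rw [hPdeg]; omega), hBqhi _ (by omega)]
    ring
  have hAdeg : Aq.natDegree ≤ n + 1 := Polynomial.natDegree_le_iff_coeff_eq_zero.mpr hAhi
  have hAdeg' : Aq.natDegree = n + 1 :=
    le_antisymm hAdeg (Polynomial.le_natDegree_of_ne_zero (by rw [hAtop]; exact one_ne_zero))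
  have hBtop : Bq.coeff n = β := by
    have := hBqc (Fin.last n)
    rwa [Fin.val_last] at this
  have hBdeg : Bq.natDegree ≤ n := Polynomial.natDegree_le_iff_coeff_eq_zero.mpr hBqhi
  have hBdeg' : Bq.natDegree = n :=
    le_antisymm hBdeg (Polynomial.le_natDegree_of_ne_zero (by rw [hBtop]; exact hβ))
  have hBne : Bq ≠ 0 := fun h => hβ (by rw [← hBtop, h, Polynomial.coeff_zero])
  -- the Wronskian-type polynomial is nonzero
  have hCne : derivative Aq * Bq - Aq * derivative Bq ≠ 0 := by
    have hA'deg : (derivative Aq).natDegree = n := by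
      refine le_antisymm ((Polynomial.natDegree_derivative_le Aq).trans (by omega)) ?_
      refine Polynomial.le_natDegree_of_ne_zero ?_
      rw [Polynomial.coeff_derivative, hAtop]
      positivity
    have hA'lead : (derivative Aq).leadingCoeff = (n + 1 : ℝ) := by
      rw [Polynomial.leadingCoeff, hA'deg, Polynomial.coeff_derivative, hAtop]
      push_cast; ring
    have hB'deg : (derivative Bq).natDegree = n - 1 := by
      refine le_antisymm ((Polynomial.natDegree_derivative_le Bq).trans (by omega)) ?_
      refine Polynomial.le_natDegree_of_ne_zero ?_
      rw [Polynomial.coeff_derivative, show n - 1 + 1 = n by omega, hBtop]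
      have : ((n - 1 : ℕ) : ℝ) + 1 ≠ 0 := by positivity
      exact mul_ne_zero hβ this
    have hB'lead : (derivative Bq).leadingCoeff = β * n := by
      rw [Polynomial.leadingCoeff, hB'deg, Polynomial.coeff_derivative,
        show n - 1 + 1 = n by omega, hBtop]
      congr 1
      have : ((n - 1 : ℕ) : ℝ) = (n : ℝ) - 1 := by
        have : (1:ℕ) ≤ n := hn
        push_cast [this]; ring
      rw [this]; ring
    have h1 : (derivative Aq * Bq).coeff (n + n) = (n + 1 : ℝ) * β := by
      have hc := Polynomial.coeff_mul_degree_add_degree (derivative Aq) Bq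
      rw [hA'deg, hBdeg'] at hc
      rw [hc, hA'lead, Polynomial.leadingCoeff, hBdeg', hBtop]
    have h2 : (Aq * derivative Bq).coeff (n + n) = (n : ℝ) * β := by
      have hc := Polynomial.coeff_mul_degree_add_degree Aq (derivative Bq)
      rw [hAdeg', hB'deg, show n + 1 + (n - 1) = n + n by omega] at hc
      rw [hc, hB'lead, Polynomial.leadingCoeff, hAdeg', hAtop]
      ring
    intro h
    have : (derivative Aq * Bq - Aq * derivative Bq).coeff (n + n) = β := by
      rw [Polynomial.coeff_sub, h1, h2]; ring
    rw [h, Polynomial.coeff_zero] at this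
    exact hβ this.symm
  -- root equations
  have hroot : ∀ t ∈ Set.Ioi T, ∀ j : Fin (n + 1),
      Aq.eval (x j t) + t * Bq.eval (x j t) = 0 := by
    intro t ht j
    have h0 : (P t).eval (x j t) = 0 := by
      rw [hP, Polynomial.eval_prod]
      exact Finset.prod_eq_zero (Finset.mem_univ j) (by simp)
    rw [hPt t ht] at h0
    simpa using h0
  -- asymptotics: any node escaping to infinity satisfies x j t / t → -β
  have hasym : ∀ j : Fin (n + 1), Tendsto (fun t => |x j t|) atTop atTop →
      Tendsto (fun t => x j t / t) atTop (nhds (-β)) := by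
    intro j hj
    have hXc : Tendsto (x j) atTop (atBot ⊔ atTop) := by
      rw [← comap_abs_atTop, tendsto_comap_iff]
      exact hj
    have hgA : Tendsto (fun t => Aq.eval (x j t) / (x j t) ^ (n + 1)) atTop (nhds 1) := by
      have := (aux_tendsto_eval_div_pow Aq (n + 1) (by omega)).comp hXc
      rw [hAtop] at this
      exact this
    have hgB : Tendsto (fun t => Bq.eval (x j t) / (x j t) ^ n) atTop (nhds β) := by
      have := (aux_tendsto_eval_div_pow Bq n (by omega)).comp hXc
      rw [hBtop] at this
      exact this
    have hXne : ∀ᶠ t in atTop, x j t ≠ 0 := by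
      filter_upwards [hj.eventually_gt_atTop 0] with t ht
      intro h; rw [h] at ht; simp at ht
    have hgBne : ∀ᶠ t in atTop, Bq.eval (x j t) / (x j t) ^ n ≠ 0 := hgB.eventually_ne hβ
    have hteq : (fun t => t / x j t) =ᶠ[atTop]
        (fun t => -(Aq.eval (x j t) / (x j t) ^ (n + 1)) / (Bq.eval (x j t) / (x j t) ^ n)) := by
      filter_upwards [hXne, hgBne, eventually_mem_set.mpr (Ioi_mem_atTop T)] with t h1 h2 h3
      have hr := hroot t h3 j
      have hBe : Bq.eval (x j t) ≠ 0 := by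
        intro h; apply h2; rw [h]; simp
      rw [div_eq_div_iff h1 h2]
      rw [pow_succ]
      field_simp
      linear_combination hr
    have hdiv : Tendsto (fun t => t / x j t) atTop (nhds (-1 / β)) := by
      have hlim := (hgA.neg).div hgB hβ
      have he1 : (-1 : ℝ) / β = -(1 : ℝ) / β := by ring
      rw [he1]
      exact Tendsto.congr' hteq.symm hlim
    have hinv := hdiv.inv₀ (by simp [hβ])
    have heq2 : (fun t => (t / x j t)⁻¹) = fun t => x j t / t := by
      funext t; rw [inv_div]
    rw [heq2] at hinv
    have : (-1 / β)⁻¹ = -β := by field_simp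
    rwa [this] at hinv
  -- root equations eventually, and distinctness
  have hrX : ∀ᶠ t in atTop, Aq.eval (x i t) + t * Bq.eval (x i t) = 0 := by
    filter_upwards [eventually_mem_set.mpr (Ioi_mem_atTop T)] with t ht using hroot t ht i
  have hrY : ∀ᶠ t in atTop, Aq.eval (x i' t) + t * Bq.eval (x i' t) = 0 := by
    filter_upwards [eventually_mem_set.mpr (Ioi_mem_atTop T)] with t ht using hroot t ht i'
  have hneXY : ∀ᶠ t in atTop, x i t ≠ x i' t := by
    filter_upwards [eventually_mem_set.mpr (Ioi_mem_atTop T)] with t ht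
    exact fun h => hii ((hmono t ht).injective h)
  -- branch and conclude
  have hbranch : ∀ j : Fin (n + 1), Tendsto (fun t => |x j t|) atTop atTop →
      ((0 < -β ∧ Tendsto (x j) atTop atTop) ∨ (-β < 0 ∧ Tendsto (x j) atTop atBot)) := by
    intro j hj
    have hAs := hasym j hj
    have hprod : ∀ᶠ t : ℝ in atTop, x j t / t * t = x j t := by
      filter_upwards [eventually_ne_atTop (0 : ℝ)] with t ht
      exact div_mul_cancel₀ _ ht
    rcases lt_or_gt_of_ne (neg_ne_zero.mpr hβ) with hneg | hpos
    · right
      refine ⟨hneg, ?_⟩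
      have := Filter.Tendsto.neg_mul_atTop hneg hAs tendsto_id
      exact Tendsto.congr' hprod this
    · left
      refine ⟨hpos, ?_⟩
      have := Filter.Tendsto.pos_mul_atTop hpos hAs tendsto_id
      exact Tendsto.congr' hprod this
  rcases hbranch i hi with ⟨h1, hX⟩ | ⟨h1, hX⟩ <;>
    rcases hbranch i' hi' with ⟨h2, hY⟩ | ⟨h2, hY⟩
  · exact aux_no_two Aq Bq hBne hCne (x i) (x i') hrX hrY hneXY (Or.inl ⟨hX, hY⟩)
  · linarith
  · linarith
  · exact aux_no_two Aq Bq hBne hCne (x i) (x i') hrX hrY hneXY (Or.inr ⟨hX, hY⟩)
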